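/- Under the same assumptions, if (f_k) and (f*_k) are two sequences in N⁻¹(y) with ‖f_k‖_F → 0 and ‖f*_k‖_F → 0, and diam(N) < ∞, then the limits of (S f_k) and (S f*_k) in the complete space 𝓖 coincide. -/

import Mathlib

/-- If two sequences in `N⁻¹(y)` have Minkowski seminorms tending to zero, then
the limits of their images under `S` in the complete space `𝓖` coincide. -/
theorem limit_independent_of_sequence
    {K : Type*} [RCLike K] {𝓕 : Type*} [AddCommGroup 𝓕] [Module K 𝓕]
    {𝓖 : Type*} [NormedAddCommGroup 𝓖] [NormedSpace K 𝓖] [CompleteSpace 𝓖]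
    {n : ℕ}
    (F : Set 𝓕) (hne : F.Nonempty)
    (hconv : ∀ f ∈ F, ∀ g ∈ F, ∀ a b : ℝ, 0 ≤ a → 0 ≤ b → a + b = 1 →
      (a : K) • f + (b : K) • g ∈ F)
    (hbal : ∀ f ∈ F, ∀ c : K, ‖c‖ ≤ 1 → c • f ∈ F)
    (hspan : Submodule.span K F = ⊤)
    (S : 𝓕 →ₗ[K] 𝓖) (N : 𝓕 →ₗ[K] (Fin n → K))
    (gaugeF : 𝓕 → ℝ)
    (hgauge : ∀ f, gaugeF f = sInf {r : ℝ | 0 < r ∧ ((r : K))⁻¹ • f ∈ F})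
    (D : ℝ)
    (hdiam : ∀ f ∈ F, ∀ g ∈ F, N f = N g → ‖S f - S g‖ ≤ D)
    (y : Fin n → K) (hy : y ∈ Set.range N)
    (f fstar : ℕ → 𝓕)
    (hinfo : ∀ k, N (f k) = y) (hinfostar : ∀ k, N (fstar k) = y)
    (hto0 : Filter.Tendsto (fun k => gaugeF (f k)) Filter.atTop (nhds 0))
    (hto0star : Filter.Tendsto (fun k => gaugeF (fstar k)) Filter.atTop (nhds 0))
    (g gstar : 𝓖)
    (hlim : Filter.Tendsto (fun k => S (f k)) Filter.atTop (nhds g))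
    (hlimstar : Filter.Tendsto (fun k => S (fstar k)) Filter.atTop (nhds gstar)) :
    g = gstar := by
  obtain ⟨f0, hf0⟩ := hne
  have h0F : (0 : 𝓕) ∈ F := by simpa using hbal f0 hf0 0 (by simp)
  -- F is absorbing
  have habs : ∀ x : 𝓕, ∃ r : ℝ, 0 < r ∧ ((r : K))⁻¹ • x ∈ F := by
    intro x
    have hx : x ∈ Submodule.span K F := by rw [hspan]; trivial
    induction hx using Submodule.span_induction with
    | mem z hz =>
      exact ⟨1, one_pos, by simpa using hz⟩
    | zero => exact ⟨1, one_pos, by simpa using h0F⟩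
    | add u v _ _ hu hv =>
      obtain ⟨r, hr, hru⟩ := hu
      obtain ⟨s, hs, hsv⟩ := hv
      refine ⟨r + s, by positivity, ?_⟩
      have hrK : ((r : ℝ) : K) ≠ 0 := RCLike.ofReal_ne_zero.mpr hr.ne'
      have hsK : ((s : ℝ) : K) ≠ 0 := RCLike.ofReal_ne_zero.mpr hs.ne'
      have hrsK : ((r + s : ℝ) : K) ≠ 0 := RCLike.ofReal_ne_zero.mpr (by positivity)
      have h1 : ((r / (r + s) : ℝ) : K) • (((r : K))⁻¹ • u)
          + ((s / (r + s) : ℝ) : K) • (((s : K))⁻¹ • v)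
          = (((r + s : ℝ) : K))⁻¹ • (u + v) := by
        rw [smul_smul, smul_smul, smul_add]
        congr 2
        · push_cast at hrsK ⊢
          field_simp
        · push_cast at hrsK ⊢
          field_simp
      rw [← h1]
      exact hconv _ hru _ hsv _ _ (by positivity) (by positivity)
        (by field_simp)
    | smul c u _ hu =>
      obtain ⟨r, hr, hru⟩ := hu
      refine ⟨r * max ‖c‖ 1, by positivity, ?_⟩
      have hm : (0:ℝ) < max ‖c‖ 1 := lt_of_lt_of_le one_pos (le_max_right _ _)
      have hrK : ((r : ℝ) : K) ≠ 0 := RCLike.ofReal_ne_zero.mpr hr.ne'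
      have hmK : ((max ‖c‖ 1 : ℝ) : K) ≠ 0 := RCLike.ofReal_ne_zero.mpr hm.ne'
      have h1 : (((r * max ‖c‖ 1 : ℝ) : K))⁻¹ • (c • u)
          = (c * ((max ‖c‖ 1 : ℝ) : K)⁻¹) • (((r : K))⁻¹ • u) := by
        rw [smul_smul, smul_smul]
        congr 1
        push_cast at hrK hmK ⊢
        field_simp
      rw [h1]
      refine hbal _ hru _ ?_
      rw [norm_mul, norm_inv, RCLike.norm_ofReal, abs_of_pos hm]
      rw [mul_inv_le_iff₀ hm, one_mul]
      exact le_max_left _ _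
  have hD0 : 0 ≤ D := by
    have := hdiam f0 hf0 f0 hf0 rfl
    simpa using this
  -- key scaling fact
  have hkey : ∀ ε : ℝ, 0 < ε → ∀ x : 𝓕, gaugeF x < ε → ((ε : K))⁻¹ • x ∈ F := by
    intro ε hε x hx
    have hne' : {r : ℝ | 0 < r ∧ ((r : K))⁻¹ • x ∈ F}.Nonempty := by
      obtain ⟨r, hr, hrx⟩ := habs x
      exact ⟨r, hr, hrx⟩
    have hbdd : BddBelow {r : ℝ | 0 < r ∧ ((r : K))⁻¹ • x ∈ F} :=
      ⟨0, fun r hr => hr.1.le⟩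
    rw [hgauge] at hx
    obtain ⟨r, ⟨hr0, hrF⟩, hrε⟩ := exists_lt_of_csInf_lt hne' hx
    have hrK : ((r : ℝ) : K) ≠ 0 := RCLike.ofReal_ne_zero.mpr hr0.ne'
    have hεK : ((ε : ℝ) : K) ≠ 0 := RCLike.ofReal_ne_zero.mpr hε.ne'
    have h1 : ((ε : K))⁻¹ • x = ((r / ε : ℝ) : K) • (((r : K))⁻¹ • x) := by
      rw [smul_smul]
      congr 1
      push_cast at hrK hεK ⊢
      field_simp
    rw [h1]
    refine hbal _ hrF _ ?_
    rw [RCLike.norm_ofReal, abs_of_pos (by positivity)]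
    rw [div_le_one hε]
    exact hrε.le
  -- eventual bound
  have hbound : ∀ ε : ℝ, 0 < ε →
      ∀ᶠ k in Filter.atTop, ‖S (f k) - S (fstar k)‖ ≤ ε * D := by
    intro ε hε
    have h1 : ∀ᶠ k in Filter.atTop, gaugeF (f k) < ε :=
      hto0.eventually (Filter.Tendsto.eventually_lt_const hε Filter.tendsto_id) |>.mono
        (fun k hk => hk)
    have h2 : ∀ᶠ k in Filter.atTop, gaugeF (fstar k) < ε :=
      hto0star.eventually (Filter.Tendsto.eventually_lt_const hε Filter.tendsto_id) |>.mono
        (fun k hk => hk)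
    filter_upwards [h1, h2] with k hk1 hk2
    have hF1 : ((ε : K))⁻¹ • f k ∈ F := hkey ε hε _ hk1
    have hF2 : ((ε : K))⁻¹ • fstar k ∈ F := hkey ε hε _ hk2
    have hN : N (((ε : K))⁻¹ • f k) = N (((ε : K))⁻¹ • fstar k) := by
      rw [map_smul, map_smul, hinfo, hinfostar]
    have hd := hdiam _ hF1 _ hF2 hN
    rw [map_smul, map_smul, ← smul_sub, norm_smul, norm_inv,
      RCLike.norm_ofReal, abs_of_pos hε] at hd
    calc ‖S (f k) - S (fstar k)‖
        = ε * (ε⁻¹ * ‖S (f k) - S (fstar k)‖) := by field_simp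
      _ ≤ ε * D := by
          exact mul_le_mul_of_nonneg_left hd hε.le
  -- conclude
  have htend : Filter.Tendsto (fun k => ‖S (f k) - S (fstar k)‖)
      Filter.atTop (nhds ‖g - gstar‖) := (hlim.sub hlimstar).norm
  have hle : ∀ δ : ℝ, 0 < δ → ‖g - gstar‖ ≤ δ := by
    intro δ hδ
    have hε : (0:ℝ) < δ / (D + 1) := by positivity
    have := le_of_tendsto htend (hbound _ hε)
    calc ‖g - gstar‖ ≤ δ / (D + 1) * D := this
      _ ≤ δ := by
          rw [div_mul_eq_mul_div, div_le_iff₀ (by positivity)]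
          nlinarith
  have : ‖g - gstar‖ ≤ 0 := le_of_forall_pos_le_add (by
    intro δ hδ
    simpa using hle δ hδ)
  have : g - gstar = 0 := by
    rw [← norm_le_zero_iff]
    exact this
  exact sub_eq_zero.mp this
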